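/- The function M(x,y) = 4xy/(√x + √y)² is jointly concave on (0,∞)². -/

import Mathlib

/-- Core polynomial inequality: `(s+t)³u²v² ≤ (t³u² + s³v²)(u+v)²` for positives. -/
lemma meanM_core (s t u v : ℝ) (hs : 0 < s) (ht : 0 < t) (hu : 0 < u) (hv : 0 < v) :
    4 * u ^ 2 * v ^ 2 / (u + v) ^ 2 ≤ (4 * t ^ 3 * u ^ 2 + 4 * s ^ 3 * v ^ 2) / (s + t) ^ 3 := by
  rw [div_le_div_iff₀ (by positivity) (by positivity)]
  nlinarith [mul_nonneg (mul_nonneg (sq_nonneg (s * v - t * u))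
      (by positivity : (0:ℝ) ≤ 2 * s * v + t * u)) hu.le,
    mul_nonneg (mul_nonneg (sq_nonneg (t * u - s * v))
      (by positivity : (0:ℝ) ≤ 2 * t * u + s * v)) hv.le]

/-- Tangent-plane bound: M(x,y) ≤ ∇M(a,b)·(x,y). -/
lemma meanM_tangent (a b x y : ℝ) (ha : 0 < a) (hb : 0 < b) (hx : 0 < x) (hy : 0 < y) :
    4 * x * y / (Real.sqrt x + Real.sqrt y) ^ 2 ≤
      (4 * Real.sqrt b ^ 3 * x + 4 * Real.sqrt a ^ 3 * y) / (Real.sqrt a + Real.sqrt b) ^ 3 := by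
  have h := meanM_core (Real.sqrt a) (Real.sqrt b) (Real.sqrt x) (Real.sqrt y)
    (Real.sqrt_pos.2 ha) (Real.sqrt_pos.2 hb) (Real.sqrt_pos.2 hx) (Real.sqrt_pos.2 hy)
  simpa [Real.sq_sqrt hx.le, Real.sq_sqrt hy.le, mul_comm, mul_assoc, mul_left_comm] using h

/-- M(x,y) = 4xy/(√x+√y)² is jointly concave on (0,∞)². -/
theorem meanM_concave :
    ConcaveOn ℝ (Set.Ioi (0 : ℝ) ×ˢ Set.Ioi (0 : ℝ))
      (fun p : ℝ × ℝ => 4 * p.1 * p.2 / (Real.sqrt p.1 + Real.sqrt p.2) ^ 2) := by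
  constructor
  · exact (convex_Ioi 0).prod (convex_Ioi 0)
  · rintro ⟨x₁, y₁⟩ ⟨hx₁, hy₁⟩ ⟨x₂, y₂⟩ ⟨hx₂, hy₂⟩ s t hs ht hst
    simp only [Set.mem_Ioi] at hx₁ hy₁ hx₂ hy₂
    simp only [Prod.smul_mk, Prod.mk_add_mk, smul_eq_mul]
    have hA : 0 < s * x₁ + t * x₂ := by
      rcases eq_or_lt_of_le hs with h | h
      · have hteq : t = 1 := by linarith
        rw [← h, hteq]; linarith
      · have : 0 < s * x₁ := mul_pos h hx₁
        nlinarith [mul_nonneg ht hx₂.le]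
    have hB : 0 < s * y₁ + t * y₂ := by
      rcases eq_or_lt_of_le hs with h | h
      · have hteq : t = 1 := by linarith
        rw [← h, hteq]; linarith
      · have : 0 < s * y₁ := mul_pos h hy₁
        nlinarith [mul_nonneg ht hy₂.le]
    set sa := Real.sqrt (s * x₁ + t * x₂) with hsa
    set sb := Real.sqrt (s * y₁ + t * y₂) with hsb
    have hsa0 : 0 < sa := Real.sqrt_pos.2 hA
    have hsb0 : 0 < sb := Real.sqrt_pos.2 hB
    have hsa2 : sa ^ 2 = s * x₁ + t * x₂ := Real.sq_sqrt hA.le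
    have hsb2 : sb ^ 2 = s * y₁ + t * y₂ := Real.sq_sqrt hB.le
    have h1 := meanM_tangent (s * x₁ + t * x₂) (s * y₁ + t * y₂) x₁ y₁ hA hB hx₁ hy₁
    have h2 := meanM_tangent (s * x₁ + t * x₂) (s * y₁ + t * y₂) x₂ y₂ hA hB hx₂ hy₂
    rw [← hsa, ← hsb] at h1 h2
    have step1 : s * (4 * x₁ * y₁ / (Real.sqrt x₁ + Real.sqrt y₁) ^ 2) +
        t * (4 * x₂ * y₂ / (Real.sqrt x₂ + Real.sqrt y₂) ^ 2) ≤
        s * ((4 * sb ^ 3 * x₁ + 4 * sa ^ 3 * y₁) / (sa + sb) ^ 3) +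
        t * ((4 * sb ^ 3 * x₂ + 4 * sa ^ 3 * y₂) / (sa + sb) ^ 3) :=
      add_le_add (mul_le_mul_of_nonneg_left h1 hs) (mul_le_mul_of_nonneg_left h2 ht)
    have step2 : s * ((4 * sb ^ 3 * x₁ + 4 * sa ^ 3 * y₁) / (sa + sb) ^ 3) +
        t * ((4 * sb ^ 3 * x₂ + 4 * sa ^ 3 * y₂) / (sa + sb) ^ 3) =
        4 * (s * x₁ + t * x₂) * (s * y₁ + t * y₂) / (sa + sb) ^ 2 := by
      rw [← mul_div_assoc, ← mul_div_assoc, ← add_div,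
        div_eq_div_iff (by positivity) (by positivity)]
      linear_combination (4 * (sa + sb) ^ 2 * sb * (s * x₁ + t * x₂)) * hsb2 +
        (4 * (sa + sb) ^ 2 * sa * (s * y₁ + t * y₂)) * hsa2
    calc s * (4 * x₁ * y₁ / (Real.sqrt x₁ + Real.sqrt y₁) ^ 2) +
        t * (4 * x₂ * y₂ / (Real.sqrt x₂ + Real.sqrt y₂) ^ 2) ≤
        s * ((4 * sb ^ 3 * x₁ + 4 * sa ^ 3 * y₁) / (sa + sb) ^ 3) +
        t * ((4 * sb ^ 3 * x₂ + 4 * sa ^ 3 * y₂) / (sa + sb) ^ 3) := step1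
      _ = 4 * (s * x₁ + t * x₂) * (s * y₁ + t * y₂) / (sa + sb) ^ 2 := step2
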